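/- arXiv:2209.09137 — 2 statements merged into one kernel-verified Lean document; each statement's English description precedes it below -/
import Mathlib

section
/- Set λ_m := min(μ_m, μ_m²), so λ_m → ∞, and set r := max(p, q, 2), K′(φ,ψ) := 1 + ‖φ‖_U^r + ‖ψ‖_U^r and K̃₂′(φ,ψ) := K′(φ,ψ) + ‖φ‖_H² + ‖ψ‖_H². Then there exists a function c′_· : [0,∞) → [0,∞), bounded on [0,T] for every T > 0 and depending only on the data of the context (the embedding constant c₀, κ, p, q and the function c_·), such that for all natural numbers m < n, all s ≥ 0, all φ ∈ V_n and all ψ ∈ V_m: 2⟨𝒫_n𝒜(s,φ) − 𝒫_m𝒜(s,ψ), φ − ψ⟩_U + Σ_{i=1}^∞ ‖𝒫_n𝒢_i(s,φ) − 𝒫_m𝒢_i(s,ψ)‖_U² ≤ c′_s · K̃₂′(φ,ψ) · ‖φ − ψ‖_U² − (κ/2)‖φ − ψ‖_H² + (c′_s/λ_m) · K′(φ,ψ) · [1 + ‖φ‖_V² + ‖ψ‖_V²]. (This is the first inequality of Lemma 3.11 of the paper.) -/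
open scoped RealInnerProductSpace
open Filter

/-- The orthogonal projection (in `U`) onto `span {b 0, …, b (n-1)}`, regarded as a map
`U → U`. -/
noncomputable def projIio {U : Type*} [NormedAddCommGroup U] [InnerProductSpace ℝ U]
    [CompleteSpace U] (b : ℕ → U) (n : ℕ) : U → U := fun x =>
  haveI : FiniteDimensional ℝ (Submodule.span ℝ (b '' Set.Iio n)) :=
    FiniteDimensional.span_of_finite ℝ ((Set.finite_Iio n).image b)
  ((Submodule.orthogonalProjectionOnto (Submodule.span ℝ (b '' Set.Iio n)) x : U))

section projHelpers
variable {U : Type*} [NormedAddCommGroup U] [InnerProductSpace ℝ U] [CompleteSpace U]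
  (b : ℕ → U) (n : ℕ)

private theorem projIio_fd' : FiniteDimensional ℝ (Submodule.span ℝ (b '' Set.Iio n)) :=
  FiniteDimensional.span_of_finite ℝ ((Set.finite_Iio n).image b)

theorem projIio_eq_self' {x : U} (hx : x ∈ Submodule.span ℝ (b '' Set.Iio n)) :
    projIio b n x = x := by
  haveI := projIio_fd' b n
  show ((Submodule.orthogonalProjectionOnto _ x : U)) = x
  rw [← Submodule.starProjection_apply]
  exact Submodule.starProjection_eq_self_iff.mpr hx

theorem projIio_mem' (x : U) : projIio b n x ∈ Submodule.span ℝ (b '' Set.Iio n) := by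
  haveI := projIio_fd' b n
  exact (Submodule.orthogonalProjectionOnto _ x).2

theorem projIio_inner_left' (u v : U) : ⟪projIio b n u, v⟫ = ⟪u, projIio b n v⟫ := by
  haveI := projIio_fd' b n
  show ⟪((Submodule.orthogonalProjectionOnto _ u : U)), v⟫ = ⟪u, ((Submodule.orthogonalProjectionOnto _ v : U))⟫
  rw [← Submodule.starProjection_apply, ← Submodule.starProjection_apply]
  exact Submodule.inner_starProjection_left_eq_right _ u v

theorem projIio_sub' (u v : U) : projIio b n (u - v) = projIio b n u - projIio b n v := by
  haveI := projIio_fd' b n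
  unfold projIio
  rw [map_sub]
  rfl

theorem projIio_zero' : projIio b n (0 : U) = 0 := by
  haveI := projIio_fd' b n
  unfold projIio
  rw [map_zero]
  rfl

theorem projIio_norm_le' (x : U) : ‖projIio b n x‖ ≤ ‖x‖ := by
  haveI := projIio_fd' b n
  calc ‖projIio b n x‖
      = ‖Submodule.orthogonalProjectionOnto (Submodule.span ℝ (b '' Set.Iio n)) x‖ := rfl
    _ ≤ ‖Submodule.orthogonalProjectionOnto (Submodule.span ℝ (b '' Set.Iio n))‖ * ‖x‖ :=
        ContinuousLinearMap.le_opNorm _ x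
    _ ≤ 1 * ‖x‖ := by
        have := Submodule.orthogonalProjectionOnto_norm_le (Submodule.span ℝ (b '' Set.Iio n))
        have h0 := norm_nonneg x
        nlinarith
    _ = ‖x‖ := one_mul _

theorem projIio_inner_sub_self' (w x : U) :
    ⟪w, x - projIio b n x⟫ = ⟪w - projIio b n w, x - projIio b n x⟫ := by
  haveI := projIio_fd' b n
  have h : x - projIio b n x ∈ (Submodule.span ℝ (b '' Set.Iio n))ᗮ :=
    by
      have h' := (Submodule.span ℝ (b '' Set.Iio n)).sub_starProjection_mem_orthogonal x
      rwa [Submodule.starProjection_apply] at h'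
  have h2 : ⟪projIio b n w, x - projIio b n x⟫ = 0 :=
    (Submodule.mem_orthogonal _ _).1 h _ (projIio_mem' b n w)
  rw [inner_sub_left, h2, sub_zero]

end projHelpers

set_option maxHeartbeats 1000000 in
/-- First inequality of Lemma 3.11. -/
theorem lemma_3_11_first
    {V H U : Type*}
    [NormedAddCommGroup V] [InnerProductSpace ℝ V] [CompleteSpace V]
    [NormedAddCommGroup H] [InnerProductSpace ℝ H] [CompleteSpace H]
    [NormedAddCommGroup U] [InnerProductSpace ℝ U] [CompleteSpace U]
    (ιVH : V →L[ℝ] H) (ιHU : H →L[ℝ] U)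
    (hVH : Function.Injective ιVH) (hHU : Function.Injective ιHU)
    (c₀ : ℝ)
    (hc₀H : ∀ φ : H, ‖ιHU φ‖ ≤ c₀ * ‖φ‖)
    (hc₀V : ∀ φ : V, ‖ιVH φ‖ ≤ c₀ * ‖φ‖)
    (a : ℕ → V)
    (μ : ℕ → ℝ) (hμ : Tendsto μ atTop atTop)
    (hproj : ∀ n : ℕ, ∀ φ : H,
      ‖ιHU φ - projIio (fun k => ιHU (ιVH (a k))) n (ιHU φ)‖ ≤ (1 / μ n) * ‖φ‖)
    (p q : ℝ) (hp : 0 ≤ p) (hq : 0 ≤ q) (κ : ℝ) (hκ : 0 < κ)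
    (c : ℝ → ℝ) (hc_nonneg : ∀ s, 0 ≤ c s)
    (hc_bdd : ∀ T > (0:ℝ), ∃ C : ℝ, ∀ s ∈ Set.Icc (0:ℝ) T, c s ≤ C)
    (𝒜 : ℝ → V → U) (𝒢 : ℕ → ℝ → V → H)
    (hyp_i : ∀ t ≥ (0:ℝ), ∀ φ : V,
      Summable (fun i => ‖𝒢 i t φ‖ ^ 2) ∧
      ‖𝒜 t φ‖ ^ 2 + ∑' i, ‖𝒢 i t φ‖ ^ 2
        ≤ c t * (1 + ‖ιHU (ιVH φ)‖ ^ p) * (1 + ‖φ‖ ^ 2))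
    (hyp_ii : ∀ t ≥ (0:ℝ), ∀ φ ψ : V,
      2 * ⟪𝒜 t φ - 𝒜 t ψ, ιHU (ιVH φ) - ιHU (ιVH ψ)⟫
          + ∑' i, ‖ιHU (𝒢 i t φ) - ιHU (𝒢 i t ψ)‖ ^ 2
        ≤ c t * (1 + ‖ιHU (ιVH φ)‖ ^ p + ‖ιHU (ιVH ψ)‖ ^ q
              + ‖ιVH φ‖ ^ 2 + ‖ιVH ψ‖ ^ 2)
            * ‖ιHU (ιVH φ) - ιHU (ιVH ψ)‖ ^ 2
          - κ * ‖ιVH φ - ιVH ψ‖ ^ 2)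
    (hyp_iii : ∀ t ≥ (0:ℝ), ∀ φ ψ : V,
      ∑' i, ⟪ιHU (𝒢 i t φ) - ιHU (𝒢 i t ψ), ιHU (ιVH φ) - ιHU (ιVH ψ)⟫ ^ 2
        ≤ c t * (1 + ‖ιHU (ιVH φ)‖ ^ p + ‖ιHU (ιVH ψ)‖ ^ q
              + ‖ιVH φ‖ ^ 2 + ‖ιVH ψ‖ ^ 2)
            * ‖ιHU (ιVH φ) - ιHU (ιVH ψ)‖ ^ 4) :
    ∃ c' : ℝ → ℝ, (∀ s, 0 ≤ c' s) ∧
      (∀ T > (0:ℝ), ∃ C : ℝ, ∀ s ∈ Set.Icc (0:ℝ) T, c' s ≤ C) ∧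
      ∀ m n : ℕ, m < n → ∀ s ≥ (0:ℝ),
      ∀ φ ∈ Submodule.span ℝ (a '' Set.Iio n), ∀ ψ ∈ Submodule.span ℝ (a '' Set.Iio m),
        2 * ⟪projIio (fun k => ιHU (ιVH (a k))) n (𝒜 s φ)
                - projIio (fun k => ιHU (ιVH (a k))) m (𝒜 s ψ),
              ιHU (ιVH φ) - ιHU (ιVH ψ)⟫
            + ∑' i, ‖projIio (fun k => ιHU (ιVH (a k))) n (ιHU (𝒢 i s φ))
                - projIio (fun k => ιHU (ιVH (a k))) m (ιHU (𝒢 i s ψ))‖ ^ 2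
          ≤ c' s * (1 + ‖ιHU (ιVH φ)‖ ^ max p (max q 2) + ‖ιHU (ιVH ψ)‖ ^ max p (max q 2)
                + ‖ιVH φ‖ ^ 2 + ‖ιVH ψ‖ ^ 2)
              * ‖ιHU (ιVH φ) - ιHU (ιVH ψ)‖ ^ 2
            - (κ / 2) * ‖ιVH φ - ιVH ψ‖ ^ 2
            + (c' s / min (μ m) (μ m ^ 2))
              * (1 + ‖ιHU (ιVH φ)‖ ^ max p (max q 2) + ‖ιHU (ιVH ψ)‖ ^ max p (max q 2))
              * (1 + ‖φ‖ ^ 2 + ‖ψ‖ ^ 2) := by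
  classical
  by_cases hH : ∀ hh : H, hh = 0
  · refine ⟨fun _ => 0, fun s => le_rfl, fun T hT => ⟨0, fun s _ => le_rfl⟩, ?_⟩
    intro m n hmn s hs φ hφ ψ hψ
    have e1 : ιVH φ = 0 := hH _
    have e2 : ιVH ψ = 0 := hH _
    have e3 : ∀ i, 𝒢 i s φ = 0 := fun i => hH _
    have e4 : ∀ i, 𝒢 i s ψ = 0 := fun i => hH _
    rw [e1, e2]
    simp [e3, e4, projIio_zero']
  · push_neg at hH
    obtain ⟨h₀, hh₀⟩ := hH
    have hh₀' : 0 < ‖h₀‖ := norm_pos_iff.mpr hh₀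
    have hc₀pos : 0 < c₀ := by
      have h1 : 0 < ‖ιHU h₀‖ := norm_pos_iff.mpr (fun h => hh₀ (hHU (by rw [h, map_zero])))
      have h2 := hc₀H h₀
      nlinarith
    have hμ0 : ∀ k, 0 ≤ μ k := by
      intro k
      by_contra hk
      push_neg at hk
      have h1 := hproj k h₀
      have h2 : 1 / μ k < 0 := div_neg_of_pos_of_neg one_pos hk
      nlinarith [norm_nonneg (ιHU h₀ - projIio (fun j => ιHU (ιVH (a j))) k (ιHU h₀))]
    have hpr : p ≤ max p (max q 2) := le_max_left _ _
    have hqr : q ≤ max p (max q 2) := le_trans (le_max_left _ _) (le_max_right _ _)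
    have hpow : ∀ t : ℝ, 0 ≤ t → ∀ e : ℝ, 0 ≤ e → e ≤ max p (max q 2) →
        t ^ e ≤ 1 + t ^ max p (max q 2) := by
      intro t ht e he her
      have h0 : (0:ℝ) ≤ t ^ max p (max q 2) := Real.rpow_nonneg ht _
      rcases le_total t 1 with h1 | h1
      · have := Real.rpow_le_one ht h1 he
        linarith
      · have := Real.rpow_le_rpow_of_exponent_le h1 her
        linarith
    refine ⟨fun s => 20 * (c s + c₀ ^ 2 + 1),
      fun s => by show (0:ℝ) ≤ 20 * (c s + c₀ ^ 2 + 1); nlinarith [hc_nonneg s, sq_nonneg c₀],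
      fun T hT => ?_, ?_⟩
    · obtain ⟨C, hC⟩ := hc_bdd T hT
      refine ⟨20 * (C + c₀ ^ 2 + 1), fun s hs => ?_⟩
      show 20 * (c s + c₀ ^ 2 + 1) ≤ 20 * (C + c₀ ^ 2 + 1)
      nlinarith [hC s hs]
    intro m n hmn s hs φ hφ ψ hψ
    simp only []
    have hii := hyp_ii s hs φ ψ
    obtain ⟨hSφ, hbφ⟩ := hyp_i s hs φ
    obtain ⟨hSψ, hbψ⟩ := hyp_i s hs ψ
    set r := max p (max q 2) with hr
    set bb : ℕ → U := fun k => ιHU (ιVH (a k)) with hbb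
    set x := ιHU (ιVH φ) with hxd
    set y := ιHU (ιVH ψ) with hyd
    set lam := min (μ m) (μ m ^ 2) with hlam
    -- memberships
    have hmem : ∀ (N : ℕ) (χ : V), χ ∈ Submodule.span ℝ (a '' Set.Iio N) →
        ιHU (ιVH χ) ∈ Submodule.span ℝ (bb '' Set.Iio N) := by
      intro N χ hχ
      have himg : bb '' Set.Iio N = (ιHU.comp ιVH) '' (a '' Set.Iio N) := by
        rw [Set.image_image]; rfl
      rw [himg, ← ContinuousLinearMap.coe_coe, Submodule.span_image]
      exact Submodule.mem_map_of_mem hχ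
    have hsub : Submodule.span ℝ (bb '' Set.Iio m) ≤ Submodule.span ℝ (bb '' Set.Iio n) :=
      Submodule.span_mono (Set.image_mono (Set.Iio_subset_Iio hmn.le))
    have hx : x ∈ Submodule.span ℝ (bb '' Set.Iio n) := hmem n φ hφ
    have hy : y ∈ Submodule.span ℝ (bb '' Set.Iio m) := hmem m ψ hψ
    have hyn : y ∈ Submodule.span ℝ (bb '' Set.Iio n) := hsub hy
    have hμm : 0 ≤ 1 / μ m := one_div_nonneg.mpr (hμ0 m)
    have hμm2 : 0 ≤ (1 / μ m) ^ 2 := sq_nonneg _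
    have hproju : ∀ hh : H, ‖ιHU hh - projIio bb m (ιHU hh)‖ ≤ 1 / μ m * ‖hh‖ := by
      intro hh
      exact hproj m hh
    -- splitting the drift term
    have hPxy : projIio bb n (x - y) = x - y :=
      projIio_eq_self' bb n (Submodule.sub_mem _ hx hyn)
    have hQy : projIio bb m y = y := projIio_eq_self' bb m hy
    have hsplit : ⟪projIio bb n (𝒜 s φ) - projIio bb m (𝒜 s ψ), x - y⟫ =
        ⟪𝒜 s φ - 𝒜 s ψ, x - y⟫ + ⟪𝒜 s ψ, x - projIio bb m x⟫ := by
      have l1 : ⟪projIio bb n (𝒜 s φ), x - y⟫ = ⟪𝒜 s φ, x - y⟫ := by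
        rw [projIio_inner_left' bb n, hPxy]
      have l2 : ⟪projIio bb m (𝒜 s ψ), x - y⟫
          = ⟪𝒜 s ψ, x - y⟫ - ⟪𝒜 s ψ, x - projIio bb m x⟫ := by
        rw [projIio_inner_left' bb m, projIio_sub' bb m, hQy,
          show projIio bb m x - y = (x - y) - (x - projIio bb m x) from by abel,
          inner_sub_right]
      rw [inner_sub_left, l1, l2, inner_sub_left]
      ring
    -- per-index noise estimate
    have key : ∀ i, ‖projIio bb n (ιHU (𝒢 i s φ)) - projIio bb m (ιHU (𝒢 i s ψ))‖ ^ 2 ≤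
        ‖ιHU (𝒢 i s φ) - ιHU (𝒢 i s ψ)‖ ^ 2
          + (1 / μ m) ^ 2 * (‖𝒢 i s φ‖ ^ 2 + 4 * ‖𝒢 i s ψ‖ ^ 2) := by
      intro i
      set u := ιHU (𝒢 i s φ) with hud
      set v := ιHU (𝒢 i s ψ) with hvd
      have hQv : projIio bb n (projIio bb m v) = projIio bb m v :=
        projIio_eq_self' bb n (hsub (projIio_mem' bb m v))
      have h1 : ‖projIio bb n u - projIio bb m v‖ ≤ ‖u - projIio bb m v‖ := by
        calc ‖projIio bb n u - projIio bb m v‖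
            = ‖projIio bb n (u - projIio bb m v)‖ := by rw [projIio_sub', hQv]
          _ ≤ ‖u - projIio bb m v‖ := projIio_norm_le' bb n _
      have h2 : ‖u - projIio bb m v‖ ^ 2
          = ‖u - v‖ ^ 2 + 2 * ⟪u - v, v - projIio bb m v⟫ + ‖v - projIio bb m v‖ ^ 2 := by
        have heq : u - projIio bb m v = (u - v) + (v - projIio bb m v) := by abel
        rw [heq, norm_add_sq_real]
      have h3 : ⟪u - v, v - projIio bb m v⟫
          ≤ (1 / μ m * (‖𝒢 i s φ‖ + ‖𝒢 i s ψ‖)) * (1 / μ m * ‖𝒢 i s ψ‖) := by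
        rw [projIio_inner_sub_self' bb m (u - v) v]
        have ha : ‖(u - v) - projIio bb m (u - v)‖ ≤ 1 / μ m * (‖𝒢 i s φ‖ + ‖𝒢 i s ψ‖) := by
          have huv : u - v = ιHU (𝒢 i s φ - 𝒢 i s ψ) := by rw [map_sub, hud, hvd]
          rw [huv]
          refine le_trans (hproju _) ?_
          exact mul_le_mul_of_nonneg_left (norm_sub_le _ _) hμm
        have hb : ‖v - projIio bb m v‖ ≤ 1 / μ m * ‖𝒢 i s ψ‖ := hproju _
        calc ⟪(u - v) - projIio bb m (u - v), v - projIio bb m v⟫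
            ≤ ‖(u - v) - projIio bb m (u - v)‖ * ‖v - projIio bb m v‖ := real_inner_le_norm _ _
          _ ≤ _ := mul_le_mul ha hb (norm_nonneg _)
              (mul_nonneg hμm (by positivity))
      have h4 : ‖v - projIio bb m v‖ ^ 2 ≤ (1 / μ m * ‖𝒢 i s ψ‖) ^ 2 :=
        pow_le_pow_left₀ (norm_nonneg _) (hproju _) 2
      have h5 : ‖projIio bb n u - projIio bb m v‖ ^ 2 ≤ ‖u - projIio bb m v‖ ^ 2 :=
        pow_le_pow_left₀ (norm_nonneg _) h1 2
      linarith [h2, h3, h4, h5, mul_nonneg hμm2 (sq_nonneg (‖𝒢 i s φ‖ - ‖𝒢 i s ψ‖))]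
    -- summability
    have hSuv : Summable (fun i => ‖ιHU (𝒢 i s φ) - ιHU (𝒢 i s ψ)‖ ^ 2) := by
      refine Summable.of_nonneg_of_le (fun i => sq_nonneg _) (fun i => ?_)
        (((hSφ.add hSψ)).mul_left (2 * c₀ ^ 2))
      have h1 : ‖ιHU (𝒢 i s φ) - ιHU (𝒢 i s ψ)‖ ≤ c₀ * ‖𝒢 i s φ - 𝒢 i s ψ‖ := by
        rw [← map_sub]; exact hc₀H _
      have h2 : ‖𝒢 i s φ - 𝒢 i s ψ‖ ≤ ‖𝒢 i s φ‖ + ‖𝒢 i s ψ‖ := norm_sub_le _ _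
      have h3 : ‖ιHU (𝒢 i s φ) - ιHU (𝒢 i s ψ)‖ ≤ c₀ * (‖𝒢 i s φ‖ + ‖𝒢 i s ψ‖) :=
        le_trans h1 (mul_le_mul_of_nonneg_left h2 hc₀pos.le)
      have h4 : ‖ιHU (𝒢 i s φ) - ιHU (𝒢 i s ψ)‖ ^ 2 ≤ (c₀ * (‖𝒢 i s φ‖ + ‖𝒢 i s ψ‖)) ^ 2 :=
        pow_le_pow_left₀ (norm_nonneg _) h3 2
      linarith [h4, mul_nonneg (sq_nonneg c₀) (sq_nonneg (‖𝒢 i s φ‖ - ‖𝒢 i s ψ‖))]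
    have hSaux : Summable (fun i => (1 / μ m) ^ 2 * (‖𝒢 i s φ‖ ^ 2 + 4 * ‖𝒢 i s ψ‖ ^ 2)) :=
      ((hSφ.add (hSψ.mul_left 4))).mul_left _
    have hSrhs : Summable (fun i => ‖ιHU (𝒢 i s φ) - ιHU (𝒢 i s ψ)‖ ^ 2
        + (1 / μ m) ^ 2 * (‖𝒢 i s φ‖ ^ 2 + 4 * ‖𝒢 i s ψ‖ ^ 2)) := hSuv.add hSaux
    have hSlhs : Summable (fun i =>
        ‖projIio bb n (ιHU (𝒢 i s φ)) - projIio bb m (ιHU (𝒢 i s ψ))‖ ^ 2) :=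
      Summable.of_nonneg_of_le (fun i => sq_nonneg _) key hSrhs
    have hTn : ∑' i, ‖projIio bb n (ιHU (𝒢 i s φ)) - projIio bb m (ιHU (𝒢 i s ψ))‖ ^ 2 ≤
        (∑' i, ‖ιHU (𝒢 i s φ) - ιHU (𝒢 i s ψ)‖ ^ 2)
          + (1 / μ m) ^ 2 * ((∑' i, ‖𝒢 i s φ‖ ^ 2) + 4 * ∑' i, ‖𝒢 i s ψ‖ ^ 2) := by
      calc ∑' i, ‖projIio bb n (ιHU (𝒢 i s φ)) - projIio bb m (ιHU (𝒢 i s ψ))‖ ^ 2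
          ≤ ∑' i, (‖ιHU (𝒢 i s φ) - ιHU (𝒢 i s ψ)‖ ^ 2
              + (1 / μ m) ^ 2 * (‖𝒢 i s φ‖ ^ 2 + 4 * ‖𝒢 i s ψ‖ ^ 2)) :=
            Summable.tsum_le_tsum key hSlhs hSrhs
        _ = _ := by
            rw [Summable.tsum_add hSuv hSaux, tsum_mul_left, Summable.tsum_add hSφ (hSψ.mul_left 4),
              tsum_mul_left]
    -- bounds from hypothesis (i)
    have htφ : 0 ≤ ∑' i, ‖𝒢 i s φ‖ ^ 2 := tsum_nonneg (fun i => sq_nonneg _)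
    have htψ : 0 ≤ ∑' i, ‖𝒢 i s ψ‖ ^ 2 := tsum_nonneg (fun i => sq_nonneg _)
    have hA2 : ‖𝒜 s ψ‖ ^ 2 ≤ c s * (1 + ‖y‖ ^ p) * (1 + ‖ψ‖ ^ 2) := by linarith
    have hGφ : ∑' i, ‖𝒢 i s φ‖ ^ 2 ≤ c s * (1 + ‖x‖ ^ p) * (1 + ‖φ‖ ^ 2) := by
      linarith [hbφ, sq_nonneg ‖𝒜 s φ‖]
    have hGψ : ∑' i, ‖𝒢 i s ψ‖ ^ 2 ≤ c s * (1 + ‖y‖ ^ p) * (1 + ‖ψ‖ ^ 2) := by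
      linarith [hbψ, sq_nonneg ‖𝒜 s ψ‖]
    -- drift error
    have hE : 2 * ⟪𝒜 s ψ, x - projIio bb m x⟫ ≤ 1 / μ m * (‖𝒜 s ψ‖ ^ 2 + ‖ιVH φ‖ ^ 2) := by
      have h1 : ⟪𝒜 s ψ, x - projIio bb m x⟫ ≤ ‖𝒜 s ψ‖ * (1 / μ m * ‖ιVH φ‖) := by
        refine le_trans (real_inner_le_norm _ _) ?_
        refine mul_le_mul_of_nonneg_left ?_ (norm_nonneg _)
        rw [hxd]
        exact hproju (ιVH φ)
      linarith [h1, mul_nonneg hμm (sq_nonneg (‖𝒜 s ψ‖ - ‖ιVH φ‖))]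
    -- comparing 1/μ with 1/lam
    have hγ : 1 / μ m ≤ 1 / lam ∧ (1 / μ m) ^ 2 ≤ 1 / lam := by
      rcases eq_or_lt_of_le (hμ0 m) with h0 | h0
      · have hl : lam = 0 := by rw [hlam, ← h0]; norm_num
        rw [hl, ← h0]
        norm_num
      · have hmin : 0 < lam := lt_min h0 (by positivity)
        constructor
        · exact one_div_le_one_div_of_le hmin (min_le_left _ _)
        · have h := one_div_le_one_div_of_le hmin (min_le_right _ _)
          calc (1 / μ m) ^ 2 = 1 / μ m ^ 2 := by rw [div_pow, one_pow]
            _ ≤ 1 / lam := h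
    have hγ0 : 0 ≤ 1 / lam := one_div_nonneg.mpr (le_min (hμ0 m) (by positivity))
    -- rpow bounds
    have hxp : ‖x‖ ^ p ≤ 1 + ‖x‖ ^ r := hpow _ (norm_nonneg _) p hp hpr
    have hyp' : ‖y‖ ^ p ≤ 1 + ‖y‖ ^ r := hpow _ (norm_nonneg _) p hp hpr
    have hyq : ‖y‖ ^ q ≤ 1 + ‖y‖ ^ r := hpow _ (norm_nonneg _) q hq hqr
    have hxr0 : 0 ≤ ‖x‖ ^ r := Real.rpow_nonneg (norm_nonneg _) r
    have hyr0 : 0 ≤ ‖y‖ ^ r := Real.rpow_nonneg (norm_nonneg _) r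
    have hxp0 : 0 ≤ ‖x‖ ^ p := Real.rpow_nonneg (norm_nonneg _) p
    have hyp0 : 0 ≤ ‖y‖ ^ p := Real.rpow_nonneg (norm_nonneg _) p
    have hyq0 : 0 ≤ ‖y‖ ^ q := Real.rpow_nonneg (norm_nonneg _) q
    have hS1 : (1:ℝ) ≤ 1 + ‖φ‖ ^ 2 + ‖ψ‖ ^ 2 := by linarith [sq_nonneg ‖φ‖, sq_nonneg ‖ψ‖]
    have hKr1 : (1:ℝ) ≤ 1 + ‖x‖ ^ r + ‖y‖ ^ r := by linarith
    have hcs : 0 ≤ c s := hc_nonneg s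
    -- main term comparison
    have hKt2 : c s * (1 + ‖x‖ ^ p + ‖y‖ ^ q + ‖ιVH φ‖ ^ 2 + ‖ιVH ψ‖ ^ 2) * ‖x - y‖ ^ 2
        ≤ 20 * (c s + c₀ ^ 2 + 1)
            * (1 + ‖x‖ ^ r + ‖y‖ ^ r + ‖ιVH φ‖ ^ 2 + ‖ιVH ψ‖ ^ 2) * ‖x - y‖ ^ 2 := by
      have h1 : 1 + ‖x‖ ^ p + ‖y‖ ^ q + ‖ιVH φ‖ ^ 2 + ‖ιVH ψ‖ ^ 2
          ≤ 3 * (1 + ‖x‖ ^ r + ‖y‖ ^ r + ‖ιVH φ‖ ^ 2 + ‖ιVH ψ‖ ^ 2) := by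
        linarith [hxp, hyq, sq_nonneg ‖ιVH φ‖, sq_nonneg ‖ιVH ψ‖]
      have hK0 : (0:ℝ) ≤ 1 + ‖x‖ ^ r + ‖y‖ ^ r + ‖ιVH φ‖ ^ 2 + ‖ιVH ψ‖ ^ 2 := by positivity
      have h2 : c s * (1 + ‖x‖ ^ p + ‖y‖ ^ q + ‖ιVH φ‖ ^ 2 + ‖ιVH ψ‖ ^ 2)
          ≤ 20 * (c s + c₀ ^ 2 + 1)
            * (1 + ‖x‖ ^ r + ‖y‖ ^ r + ‖ιVH φ‖ ^ 2 + ‖ιVH ψ‖ ^ 2) := by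
        calc c s * (1 + ‖x‖ ^ p + ‖y‖ ^ q + ‖ιVH φ‖ ^ 2 + ‖ιVH ψ‖ ^ 2)
            ≤ c s * (3 * (1 + ‖x‖ ^ r + ‖y‖ ^ r + ‖ιVH φ‖ ^ 2 + ‖ιVH ψ‖ ^ 2)) :=
              mul_le_mul_of_nonneg_left h1 hcs
          _ = (3 * c s) * (1 + ‖x‖ ^ r + ‖y‖ ^ r + ‖ιVH φ‖ ^ 2 + ‖ιVH ψ‖ ^ 2) := by ring
          _ ≤ 20 * (c s + c₀ ^ 2 + 1)
              * (1 + ‖x‖ ^ r + ‖y‖ ^ r + ‖ιVH φ‖ ^ 2 + ‖ιVH ψ‖ ^ 2) :=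
              mul_le_mul_of_nonneg_right (by linarith [sq_nonneg c₀, hcs]) hK0
      exact mul_le_mul_of_nonneg_right h2 (sq_nonneg _)
    -- error term assembly
    have hKrS : ‖φ‖ ^ 2 ≤ (1 + ‖x‖ ^ r + ‖y‖ ^ r) * (1 + ‖φ‖ ^ 2 + ‖ψ‖ ^ 2) := by
      have hprod : (0:ℝ) ≤ (‖x‖ ^ r + ‖y‖ ^ r) * (1 + ‖φ‖ ^ 2 + ‖ψ‖ ^ 2) :=
        mul_nonneg (add_nonneg hxr0 hyr0) (by positivity)
      linarith [hprod, sq_nonneg ‖ψ‖]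
    have hKrS0 : (0:ℝ) ≤ (1 + ‖x‖ ^ r + ‖y‖ ^ r) * (1 + ‖φ‖ ^ 2 + ‖ψ‖ ^ 2) := by positivity
    have e1 : ‖𝒜 s ψ‖ ^ 2 + ‖ιVH φ‖ ^ 2
        ≤ (2 * c s + c₀ ^ 2) * ((1 + ‖x‖ ^ r + ‖y‖ ^ r) * (1 + ‖φ‖ ^ 2 + ‖ψ‖ ^ 2)) := by
      have m1 : 1 + ‖y‖ ^ p ≤ 2 * (1 + ‖x‖ ^ r + ‖y‖ ^ r) := by linarith
      have m2 : 1 + ‖ψ‖ ^ 2 ≤ 1 + ‖φ‖ ^ 2 + ‖ψ‖ ^ 2 := by linarith [sq_nonneg ‖φ‖]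
      have b1 : ‖𝒜 s ψ‖ ^ 2
          ≤ c s * (2 * (1 + ‖x‖ ^ r + ‖y‖ ^ r)) * (1 + ‖φ‖ ^ 2 + ‖ψ‖ ^ 2) := by
        refine le_trans hA2 ?_
        calc c s * (1 + ‖y‖ ^ p) * (1 + ‖ψ‖ ^ 2)
            ≤ c s * (2 * (1 + ‖x‖ ^ r + ‖y‖ ^ r)) * (1 + ‖ψ‖ ^ 2) :=
              mul_le_mul_of_nonneg_right (mul_le_mul_of_nonneg_left m1 hcs) (by positivity)
          _ ≤ c s * (2 * (1 + ‖x‖ ^ r + ‖y‖ ^ r)) * (1 + ‖φ‖ ^ 2 + ‖ψ‖ ^ 2) :=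
              mul_le_mul_of_nonneg_left m2 (by positivity)
      have b2 : ‖ιVH φ‖ ^ 2
          ≤ c₀ ^ 2 * ((1 + ‖x‖ ^ r + ‖y‖ ^ r) * (1 + ‖φ‖ ^ 2 + ‖ψ‖ ^ 2)) := by
        have hb : ‖ιVH φ‖ ^ 2 ≤ (c₀ * ‖φ‖) ^ 2 :=
          pow_le_pow_left₀ (norm_nonneg _) (hc₀V φ) 2
        have hb2 := mul_le_mul_of_nonneg_left hKrS (sq_nonneg c₀)
        linarith [hb, hb2]
      linarith [b1, b2]
    have e2 : (∑' i, ‖𝒢 i s φ‖ ^ 2) + 4 * ∑' i, ‖𝒢 i s ψ‖ ^ 2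
        ≤ 10 * c s * ((1 + ‖x‖ ^ r + ‖y‖ ^ r) * (1 + ‖φ‖ ^ 2 + ‖ψ‖ ^ 2)) := by
      have m1 : 1 + ‖x‖ ^ p ≤ 2 * (1 + ‖x‖ ^ r + ‖y‖ ^ r) := by linarith
      have m1' : 1 + ‖y‖ ^ p ≤ 2 * (1 + ‖x‖ ^ r + ‖y‖ ^ r) := by linarith
      have m2 : 1 + ‖φ‖ ^ 2 ≤ 1 + ‖φ‖ ^ 2 + ‖ψ‖ ^ 2 := by linarith [sq_nonneg ‖ψ‖]
      have m2' : 1 + ‖ψ‖ ^ 2 ≤ 1 + ‖φ‖ ^ 2 + ‖ψ‖ ^ 2 := by linarith [sq_nonneg ‖φ‖]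
      have b1 : ∑' i, ‖𝒢 i s φ‖ ^ 2
          ≤ c s * (2 * (1 + ‖x‖ ^ r + ‖y‖ ^ r)) * (1 + ‖φ‖ ^ 2 + ‖ψ‖ ^ 2) := by
        refine le_trans hGφ ?_
        calc c s * (1 + ‖x‖ ^ p) * (1 + ‖φ‖ ^ 2)
            ≤ c s * (2 * (1 + ‖x‖ ^ r + ‖y‖ ^ r)) * (1 + ‖φ‖ ^ 2) :=
              mul_le_mul_of_nonneg_right (mul_le_mul_of_nonneg_left m1 hcs) (by positivity)
          _ ≤ c s * (2 * (1 + ‖x‖ ^ r + ‖y‖ ^ r)) * (1 + ‖φ‖ ^ 2 + ‖ψ‖ ^ 2) :=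
              mul_le_mul_of_nonneg_left m2 (by positivity)
      have b2 : ∑' i, ‖𝒢 i s ψ‖ ^ 2
          ≤ c s * (2 * (1 + ‖x‖ ^ r + ‖y‖ ^ r)) * (1 + ‖φ‖ ^ 2 + ‖ψ‖ ^ 2) := by
        refine le_trans hGψ ?_
        calc c s * (1 + ‖y‖ ^ p) * (1 + ‖ψ‖ ^ 2)
            ≤ c s * (2 * (1 + ‖x‖ ^ r + ‖y‖ ^ r)) * (1 + ‖ψ‖ ^ 2) :=
              mul_le_mul_of_nonneg_right (mul_le_mul_of_nonneg_left m1' hcs) (by positivity)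
          _ ≤ c s * (2 * (1 + ‖x‖ ^ r + ‖y‖ ^ r)) * (1 + ‖φ‖ ^ 2 + ‖ψ‖ ^ 2) :=
              mul_le_mul_of_nonneg_left m2' (by positivity)
      linarith [b1, b2]
    have hErr : 1 / μ m * (‖𝒜 s ψ‖ ^ 2 + ‖ιVH φ‖ ^ 2)
        + (1 / μ m) ^ 2 * ((∑' i, ‖𝒢 i s φ‖ ^ 2) + 4 * ∑' i, ‖𝒢 i s ψ‖ ^ 2)
        ≤ (20 * (c s + c₀ ^ 2 + 1) / lam) * (1 + ‖x‖ ^ r + ‖y‖ ^ r)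
            * (1 + ‖φ‖ ^ 2 + ‖ψ‖ ^ 2) := by
      have hα : 1 / μ m * (‖𝒜 s ψ‖ ^ 2 + ‖ιVH φ‖ ^ 2)
          ≤ 1 / lam * ((2 * c s + c₀ ^ 2)
            * ((1 + ‖x‖ ^ r + ‖y‖ ^ r) * (1 + ‖φ‖ ^ 2 + ‖ψ‖ ^ 2))) :=
        mul_le_mul hγ.1 e1 (by positivity) hγ0
      have hβ : (1 / μ m) ^ 2 * ((∑' i, ‖𝒢 i s φ‖ ^ 2) + 4 * ∑' i, ‖𝒢 i s ψ‖ ^ 2)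
          ≤ 1 / lam * (10 * c s
            * ((1 + ‖x‖ ^ r + ‖y‖ ^ r) * (1 + ‖φ‖ ^ 2 + ‖ψ‖ ^ 2))) :=
        mul_le_mul hγ.2 e2 (by linarith) hγ0
      have hcoef : 1 / lam * ((2 * c s + c₀ ^ 2)
            * ((1 + ‖x‖ ^ r + ‖y‖ ^ r) * (1 + ‖φ‖ ^ 2 + ‖ψ‖ ^ 2)))
          + 1 / lam * (10 * c s * ((1 + ‖x‖ ^ r + ‖y‖ ^ r) * (1 + ‖φ‖ ^ 2 + ‖ψ‖ ^ 2)))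
          ≤ (20 * (c s + c₀ ^ 2 + 1) / lam) * (1 + ‖x‖ ^ r + ‖y‖ ^ r)
            * (1 + ‖φ‖ ^ 2 + ‖ψ‖ ^ 2) := by
        have h1 : 12 * c s + c₀ ^ 2 ≤ 20 * (c s + c₀ ^ 2 + 1) := by
          linarith [sq_nonneg c₀, hcs]
        have h2 : 1 / lam * ((12 * c s + c₀ ^ 2)
              * ((1 + ‖x‖ ^ r + ‖y‖ ^ r) * (1 + ‖φ‖ ^ 2 + ‖ψ‖ ^ 2)))
            ≤ 1 / lam * (20 * (c s + c₀ ^ 2 + 1)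
              * ((1 + ‖x‖ ^ r + ‖y‖ ^ r) * (1 + ‖φ‖ ^ 2 + ‖ψ‖ ^ 2))) :=
          mul_le_mul_of_nonneg_left (mul_le_mul_of_nonneg_right h1 hKrS0) hγ0
        have h3 : (20 * (c s + c₀ ^ 2 + 1) / lam) * (1 + ‖x‖ ^ r + ‖y‖ ^ r)
              * (1 + ‖φ‖ ^ 2 + ‖ψ‖ ^ 2)
            = 1 / lam * (20 * (c s + c₀ ^ 2 + 1)
              * ((1 + ‖x‖ ^ r + ‖y‖ ^ r) * (1 + ‖φ‖ ^ 2 + ‖ψ‖ ^ 2))) := by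
          ring
        rw [h3]
        linarith [h2]
      linarith [hα, hβ, hcoef]
    -- final assembly
    rw [hsplit]
    have hW : 0 ≤ ‖ιVH φ - ιVH ψ‖ ^ 2 := sq_nonneg _
    have hκW : 0 ≤ κ / 2 * ‖ιVH φ - ιVH ψ‖ ^ 2 :=
      mul_nonneg (by linarith [hκ.le]) hW
    linarith [hTn, hE, hErr, hKt2, hii, hκW]
end

section
/- Suppose (f_n) is a sequence of strongly measurable functions f_n : X → V with sup_n ∫_X ‖f_n(x)‖²_V dμ(x) ≤ B < ∞, and suppose g : X → H is strongly measurable with ∫_X ‖ι(f_n(x)) − g(x)‖²_H dμ(x) → 0 as n → ∞. Then there exists a strongly measurable function f : X → V such that ι(f(x)) = g(x) for μ-a.e. x ∈ X and ∫_X ‖f(x)‖²_V dμ(x) ≤ B. (This weak-compactness identification of the limit in the smaller space is the argument used in the proofs of Theorem 3.6 and Proposition 3.20 of the paper to obtain the L²([0,T];V)-regularity and the progressive measurability in V of the limiting process, applied with X = Ω × [0,T] equipped with suitable product σ-algebras.) -/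
open MeasureTheory Filter Topology

open RealInnerProductSpace in
/-- Any norm-bounded sequence in a real Hilbert space has a weakly convergent subsequence,
with weak limit respecting the norm bound. -/
theorem exists_weak_limit_of_bounded {E : Type*} [NormedAddCommGroup E]
    [InnerProductSpace ℝ E] [CompleteSpace E] (u : ℕ → E) (C : ℝ) (hC : 0 ≤ C)
    (hu : ∀ n, ‖u n‖ ≤ C) :
    ∃ v : E, ‖v‖ ≤ C ∧ ∃ φ : ℕ → ℕ, StrictMono φ ∧
      ∀ w : E, Tendsto (fun k => ⟪w, u (φ k)⟫) atTop (𝓝 ⟪w, v⟫) := by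
  classical
  -- diagonal extraction via compactness of the product of intervals
  have hbound : ∀ m n : ℕ, ⟪u m, u n⟫ ∈ Set.Icc (-(C * C)) (C * C) := by
    intro m n
    have h1 : |⟪u m, u n⟫| ≤ ‖u m‖ * ‖u n‖ := abs_real_inner_le_norm _ _
    have h2 : ‖u m‖ * ‖u n‖ ≤ C * C :=
      mul_le_mul (hu m) (hu n) (norm_nonneg _) hC
    have := abs_le.mp (h1.trans h2)
    exact ⟨this.1, this.2⟩
  obtain ⟨c, -, φ, hφ, hconv⟩ :=
    (isCompact_univ_pi (fun m : ℕ => isCompact_Icc (a := -(C * C)) (b := C * C))).tendsto_subseq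
      (x := fun n => fun m => ⟪u m, u n⟫) (fun n => Set.mem_univ_pi.mpr fun m => hbound m n)
  have hc : ∀ m : ℕ, Tendsto (fun k => ⟪u m, u (φ k)⟫) atTop (𝓝 (c m)) := by
    intro m
    exact tendsto_pi_nhds.mp hconv m
  -- every inner product sequence converges
  set S : Submodule ℝ E := (Submodule.span ℝ (Set.range u)).topologicalClosure with hSdef
  have hspan : ∀ w ∈ Submodule.span ℝ (Set.range u),
      ∃ l : ℝ, Tendsto (fun k => ⟪w, u (φ k)⟫) atTop (𝓝 l) := by
    intro w hw
    induction hw using Submodule.span_induction with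
    | mem x hx =>
        obtain ⟨m, rfl⟩ := hx
        exact ⟨c m, hc m⟩
    | zero => exact ⟨0, by simpa using tendsto_const_nhds⟩
    | add x y hx hy ihx ihy =>
        obtain ⟨l1, h1⟩ := ihx; obtain ⟨l2, h2⟩ := ihy
        exact ⟨l1 + l2, by simpa [inner_add_left] using h1.add h2⟩
    | smul a x hx ihx =>
        obtain ⟨l, h⟩ := ihx
        exact ⟨a * l, by simpa [inner_smul_left] using h.const_mul a⟩
  have hSc : ∀ w ∈ S, ∃ l : ℝ, Tendsto (fun k => ⟪w, u (φ k)⟫) atTop (𝓝 l) := by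
    intro w hw
    refine cauchySeq_tendsto_of_complete ?_
    rw [Metric.cauchySeq_iff]
    intro ε hε
    have hw' : w ∈ closure (Submodule.span ℝ (Set.range u) : Set E) := hw
    obtain ⟨w', hw'mem, hww'⟩ :=
      Metric.mem_closure_iff.mp hw' (ε / (3 * (C + 1))) (by positivity)
    obtain ⟨l, hl⟩ := hspan w' hw'mem
    obtain ⟨N, hN⟩ := Metric.cauchySeq_iff.mp hl.cauchySeq (ε / 3) (by positivity)
    refine ⟨N, fun m hm n hn => ?_⟩
    have est : ∀ k : ℕ, |⟪w, u (φ k)⟫ - ⟪w', u (φ k)⟫| ≤ ε / 3 := by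
      intro k
      have heq : ⟪w, u (φ k)⟫ - ⟪w', u (φ k)⟫ = ⟪w - w', u (φ k)⟫ :=
        (inner_sub_left _ _ _).symm
      rw [heq]
      have hmul : (ε / (3 * (C + 1))) * (C + 1) = ε / 3 := by
        field_simp
      calc |⟪w - w', u (φ k)⟫| ≤ ‖w - w'‖ * ‖u (φ k)‖ := abs_real_inner_le_norm _ _
        _ ≤ (ε / (3 * (C + 1))) * (C + 1) := by
            apply mul_le_mul ?_ ?_ (norm_nonneg _) (by positivity)
            · rw [← dist_eq_norm]; exact hww'.le
            · linarith [hu (φ k)]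
        _ = ε / 3 := hmul
    have h1 := est m
    have h2 := est n
    have h3 := hN m hm n hn
    rw [Real.dist_eq] at h3 ⊢
    have t1 : |⟪w, u (φ m)⟫ - ⟪w, u (φ n)⟫| ≤
        |⟪w, u (φ m)⟫ - ⟪w', u (φ m)⟫| + |⟪w', u (φ m)⟫ - ⟪w', u (φ n)⟫|
          + |⟪w', u (φ n)⟫ - ⟪w, u (φ n)⟫| := by
      have := abs_sub_le (⟪w, u (φ m)⟫) (⟪w', u (φ m)⟫) (⟪w, u (φ n)⟫)
      have := abs_sub_le (⟪w', u (φ m)⟫) (⟪w', u (φ n)⟫) (⟪w, u (φ n)⟫)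
      linarith
    have h2' : |⟪w', u (φ n)⟫ - ⟪w, u (φ n)⟫| ≤ ε / 3 := by
      rw [abs_sub_comm]; exact h2
    linarith
  have claim : ∀ w : E, ∃ l : ℝ, Tendsto (fun k => ⟪w, u (φ k)⟫) atTop (𝓝 l) := by
    intro w
    haveI : CompleteSpace S := (Submodule.isClosed_topologicalClosure _).completeSpace_coe
    have hmem : w ∈ S ⊔ Sᗮ := by
      rw [Submodule.sup_orthogonal_of_hasOrthogonalProjection]; trivial
    obtain ⟨a, ha, b, hb, rfl⟩ := Submodule.mem_sup.mp hmem
    have hb0 : ∀ k : ℕ, ⟪b, u (φ k)⟫ = 0 := by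
      intro k
      have hus : u (φ k) ∈ S :=
        Submodule.le_topologicalClosure _ (Submodule.subset_span ⟨φ k, rfl⟩)
      have := (Submodule.mem_orthogonal S b).mp hb _ hus
      rwa [real_inner_comm] at this
    obtain ⟨l, hl⟩ := hSc a ha
    refine ⟨l, ?_⟩
    have : (fun k => ⟪a + b, u (φ k)⟫) = fun k => ⟪a, u (φ k)⟫ := by
      funext k; rw [inner_add_left, hb0 k, add_zero]
    rw [this]; exact hl
  choose L hL using claim
  have Ladd : ∀ w₁ w₂ : E, L (w₁ + w₂) = L w₁ + L w₂ := fun w₁ w₂ =>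
    tendsto_nhds_unique (hL (w₁ + w₂))
      (by simpa [inner_add_left] using (hL w₁).add (hL w₂))
  have Lsmul : ∀ (a : ℝ) (w : E), L (a • w) = a * L w := fun a w =>
    tendsto_nhds_unique (hL (a • w))
      (by simpa [inner_smul_left] using (hL w).const_mul a)
  have Lbound : ∀ w : E, |L w| ≤ C * ‖w‖ := by
    intro w
    refine le_of_tendsto (hL w).abs (Eventually.of_forall fun k => ?_)
    calc |⟪w, u (φ k)⟫| ≤ ‖w‖ * ‖u (φ k)‖ := abs_real_inner_le_norm _ _
      _ ≤ ‖w‖ * C := mul_le_mul_of_nonneg_left (hu _) (norm_nonneg _)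
      _ = C * ‖w‖ := mul_comm _ _
  let Λ : E →L[ℝ] ℝ := LinearMap.mkContinuous
    { toFun := L, map_add' := Ladd, map_smul' := fun a w => Lsmul a w } C
    (fun w => by simpa [Real.norm_eq_abs] using Lbound w)
  set v : E := (InnerProductSpace.toDual ℝ E).symm Λ with hvdef
  have hvL : ∀ w : E, ⟪v, w⟫ = L w := by
    intro w
    rw [hvdef, InnerProductSpace.toDual_symm_apply]
    simp [Λ]
  have hvnorm : ‖v‖ ≤ C := by
    have hvv : ‖v‖ * ‖v‖ ≤ C * ‖v‖ := by
      calc ‖v‖ * ‖v‖ = ⟪v, v⟫ := (real_inner_self_eq_norm_mul_norm v).symm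
        _ = L v := hvL v
        _ ≤ |L v| := le_abs_self _
        _ ≤ C * ‖v‖ := Lbound v
    rcases eq_or_lt_of_le (norm_nonneg v) with h0 | h0
    · rw [← h0]; exact hC
    · exact le_of_mul_le_mul_right hvv h0
  refine ⟨v, hvnorm, φ, hφ, fun w => ?_⟩
  rw [real_inner_comm, hvL w]
  exact hL w

/-- The lower integral of the squared norm equals the square of the `L²` seminorm. -/
theorem lintegral_sq_eq_eLpNorm_sq {X : Type*} [MeasurableSpace X] (μ : Measure X)
    {W : Type*} [NormedAddCommGroup W] (h : X → W) :
    ∫⁻ x, (‖h x‖₊ : ENNReal) ^ 2 ∂μ = (eLpNorm h 2 μ) ^ 2 := by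
  rw [eLpNorm_eq_lintegral_rpow_enorm_toReal two_ne_zero ENNReal.ofNat_ne_top]
  rw [← ENNReal.rpow_natCast _ 2, ← ENNReal.rpow_mul]
  norm_num
  rfl

open RealInnerProductSpace in
/-- Weak-compactness identification of a limit in the smaller space: if `(f n)` is a
sequence of strongly measurable `V`-valued functions with uniformly bounded `L²` norms,
and `ι ∘ f n → g` in `L²(X; H)` through the continuous embedding `ι : V → H`, then `g`
admits a strongly measurable `V`-valued representative `F` respecting the same `L²` bound. -/
theorem weak_limit_in_smaller_space
    {X : Type*} [MeasurableSpace X] (μ : Measure X) [SigmaFinite μ]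
    {V H : Type*}
    [NormedAddCommGroup V] [InnerProductSpace ℝ V] [CompleteSpace V]
    [TopologicalSpace.SeparableSpace V]
    [NormedAddCommGroup H] [InnerProductSpace ℝ H] [CompleteSpace H]
    [TopologicalSpace.SeparableSpace H]
    (ι : V →L[ℝ] H) (hι : Function.Injective ι)
    (f : ℕ → X → V) (hf : ∀ n, StronglyMeasurable (f n))
    (B : ℝ)
    (hB : ∀ n, ∫⁻ x, (‖f n x‖₊ : ENNReal) ^ 2 ∂μ ≤ ENNReal.ofReal B)
    (g : X → H) (hg : StronglyMeasurable g)
    (hconv : Tendsto (fun n => ∫⁻ x, (‖ι (f n x) - g x‖₊ : ENNReal) ^ 2 ∂μ)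
      atTop (𝓝 0)) :
    ∃ F : X → V, StronglyMeasurable F ∧ (∀ᵐ x ∂μ, ι (F x) = g x) ∧
      ∫⁻ x, (‖F x‖₊ : ENNReal) ^ 2 ∂μ ≤ ENNReal.ofReal B := by
  classical
  set C : ℝ := Real.sqrt (max B 0) with hCdef
  have hC0 : 0 ≤ C := Real.sqrt_nonneg _
  have hCsq : C ^ 2 = max B 0 := Real.sq_sqrt (le_max_right B 0)
  have hofB : ENNReal.ofReal B = ENNReal.ofReal (C ^ 2) := by
    rw [hCsq]
    rcases le_total B 0 with h | h
    · rw [max_eq_right h, ENNReal.ofReal_zero, ENNReal.ofReal_eq_zero.mpr h]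
    · rw [max_eq_left h]
  have hofC2 : ENNReal.ofReal (C ^ 2) = (ENNReal.ofReal C) ^ 2 := by
    rw [sq, sq, ENNReal.ofReal_mul hC0]
  -- L² norm bounds
  have hB' : ∀ n, eLpNorm (f n) 2 μ ≤ ENNReal.ofReal C := by
    intro n
    have h1 : (eLpNorm (f n) 2 μ) ^ 2 ≤ (ENNReal.ofReal C) ^ 2 := by
      rw [← lintegral_sq_eq_eLpNorm_sq, ← hofC2, ← hofB]; exact hB n
    by_contra hcon
    push_neg at hcon
    exact absurd h1 (not_le.mpr (ENNReal.pow_lt_pow_left two_ne_zero hcon))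
  have hfm : ∀ n, MemLp (f n) 2 μ := fun n =>
    ⟨(hf n).aestronglyMeasurable, lt_of_le_of_lt (hB' n) ENNReal.ofReal_lt_top⟩
  -- g ∈ L²
  have hg2 : MemLp g 2 μ := by
    have hev : ∀ᶠ n in atTop,
        ∫⁻ x, (‖ι (f n x) - g x‖₊ : ENNReal) ^ 2 ∂μ ≤ 1 :=
      hconv.eventually_le_const (by norm_num)
    obtain ⟨n, hn⟩ := hev.exists
    have hsub : MemLp (fun x => ι (f n x) - g x) 2 μ := by
      refine ⟨((ι.continuous.comp_stronglyMeasurable (hf n)).sub hg).aestronglyMeasurable, ?_⟩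
      have h1 : (eLpNorm (fun x => ι (f n x) - g x) 2 μ) ^ 2 ≤ 1 := by
        rw [← lintegral_sq_eq_eLpNorm_sq]; exact hn
      by_contra hcon
      push_neg at hcon
      have htop : eLpNorm (fun x => ι (f n x) - g x) 2 μ = ⊤ := by simpa using hcon
      rw [htop] at h1
      simp [ENNReal.top_pow] at h1
    have hιf : MemLp (fun x => ι (f n x)) 2 μ := ι.comp_memLp' (hfm n)
    have : MemLp (fun x => ι (f n x) - (ι (f n x) - g x)) 2 μ := hιf.sub hsub
    simpa using this
  -- move to Lp spaces
  let u : ℕ → Lp V 2 μ := fun n => (hfm n).toLp (f n)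
  let G : Lp H 2 μ := hg2.toLp g
  let T : Lp V 2 μ →L[ℝ] Lp H 2 μ := ι.compLpL 2 μ
  have hnormu : ∀ n, ‖u n‖ ≤ C := by
    intro n
    rw [Lp.norm_toLp]
    exact ENNReal.toReal_le_of_le_ofReal hC0 (hB' n)
  -- strong convergence T (u n) → G
  have hTG : Tendsto (fun n => T (u n)) atTop (𝓝 G) := by
    rw [tendsto_iff_dist_tendsto_zero]
    have hdist : ∀ n, dist (T (u n)) G
        = (eLpNorm (fun x => ι (f n x) - g x) 2 μ).toReal := by
      intro n
      rw [Lp.dist_def]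
      congr 1
      apply eLpNorm_congr_ae
      filter_upwards [ι.coeFn_compLpL (u n), (hfm n).coeFn_toLp,
        hg2.coeFn_toLp] with x h1 h2 h3
      simp only [Pi.sub_apply]
      rw [h1, h2, h3]
    have he : ∀ n, eLpNorm (fun x => ι (f n x) - g x) 2 μ
        = (∫⁻ x, (‖ι (f n x) - g x‖₊ : ENNReal) ^ 2 ∂μ) ^ (1 / 2 : ℝ) := by
      intro n
      rw [lintegral_sq_eq_eLpNorm_sq, ← ENNReal.rpow_natCast _ 2, ← ENNReal.rpow_mul]
      norm_num
    have h0 : Tendsto (fun n =>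
        (∫⁻ x, (‖ι (f n x) - g x‖₊ : ENNReal) ^ 2 ∂μ) ^ (1 / 2 : ℝ)) atTop (𝓝 0) := by
      have hcont : ContinuousAt (fun z : ENNReal => z ^ (1 / 2 : ℝ)) 0 :=
        ENNReal.continuous_rpow_const.continuousAt
      have := (hcont.tendsto.comp hconv)
      simp [ENNReal.zero_rpow_of_pos, Function.comp] at this ⊢
      exact this
    have he' : Tendsto (fun n => eLpNorm (fun x => ι (f n x) - g x) 2 μ) atTop (𝓝 0) := by
      simp only [he]
      exact h0
    have hfin : Tendsto (fun n => (eLpNorm (fun x => ι (f n x) - g x) 2 μ).toReal)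
        atTop (𝓝 0) := by
      have := (ENNReal.tendsto_toReal (by norm_num : (0 : ENNReal) ≠ ⊤)).comp he'
      simp at this ⊢
      exact this
    simpa [hdist] using hfin
  -- weak limit
  obtain ⟨v, hvC, φ, hφ, hweak⟩ := exists_weak_limit_of_bounded u C hC0 hnormu
  -- identification T v = G
  have hTv : T v = G := by
    refine ext_inner_left ℝ fun w => ?_
    have h1 : Tendsto (fun k => ⟪w, T (u (φ k))⟫) atTop (𝓝 ⟪w, T v⟫) := by
      have := hweak ((ContinuousLinearMap.adjoint T) w)
      simpa [ContinuousLinearMap.adjoint_inner_left] using this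
    have h2 : Tendsto (fun k => ⟪w, T (u (φ k))⟫) atTop (𝓝 ⟪w, G⟫) :=
      Filter.Tendsto.inner tendsto_const_nhds (hTG.comp hφ.tendsto_atTop)
    exact tendsto_nhds_unique h1 h2
  -- extract representative
  have hvmeas := Lp.aestronglyMeasurable v
  refine ⟨hvmeas.mk v, hvmeas.stronglyMeasurable_mk, ?_, ?_⟩
  · have e1 : ⇑v =ᵐ[μ] hvmeas.mk v := hvmeas.ae_eq_mk
    have e2 : ⇑(T v) =ᵐ[μ] fun x => ι (v x) := ι.coeFn_compLpL v
    have e3 : ⇑G =ᵐ[μ] g := hg2.coeFn_toLp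
    rw [hTv] at e2
    filter_upwards [e1, e2, e3] with x h1 h2 h3
    rw [← h1, ← h2, h3]
  · have e1 : ∫⁻ x, (‖hvmeas.mk v x‖₊ : ENNReal) ^ 2 ∂μ
        = ∫⁻ x, (‖(v : X → V) x‖₊ : ENNReal) ^ 2 ∂μ := by
      apply lintegral_congr_ae
      filter_upwards [hvmeas.ae_eq_mk] with x hx
      rw [← hx]
    rw [e1, lintegral_sq_eq_eLpNorm_sq]
    have h3 : eLpNorm (⇑v) 2 μ = ENNReal.ofReal ‖v‖ := by
      rw [Lp.norm_def, ENNReal.ofReal_toReal (Lp.eLpNorm_ne_top v)]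
    rw [h3, hofB, hofC2]
    exact pow_le_pow_left' (ENNReal.ofReal_le_ofReal hvC) 2
end
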